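/- Let $1<p<\infty$, $\varepsilon>0$, $s>0$, and $\mu$ a positive Borel measure on the unit ball $B$ of $\mathbb{C}^n$. If $\sup_{w\in B}\; (\log\tfrac{2}{1-|w|^2})^{p-1+\varepsilon} \int_B \frac{(1-|w|^2)^s}{|1-\langle z,w\rangle|^{s}}\,d\mu(z) < \infty$, then there is $C>0$ with $\mu(Q_\delta(\xi)) \le C\,(\log\frac{2}{\delta})^{1-p-\varepsilon}$ for all $\xi \in S$ and $0<\delta<1$. -/

import Mathlib

open MeasureTheory Metric Set

noncomputable section

/-- `C^n` as a Euclidean space. -/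
abbrev En (n : ℕ) := EuclideanSpace ℂ (Fin n)

instance En.measureSpace {n : ℕ} : MeasureSpace (En n) :=
  { toMeasurableSpace := inferInstance
    volume := Measure.map (WithLp.toLp 2) (volume : Measure (Fin n → ℂ)) }

instance En.borelSpace {n : ℕ} : BorelSpace (En n) :=
  inferInstance

/-- The Hermitian pairing of z and w. -/
def herm {n : ℕ} (z w : En n) : ℂ := ∑ j, z j * (starRingEnd ℂ) (w j)

/-- The Carleson box Q_delta(xi). -/
def Qbox {n : ℕ} (δ : ℝ) (ξ : En n) : Set (En n) :=
  {z | z ∈ Metric.ball (0 : En n) 1 ∧ ‖1 - herm z ξ‖ < δ}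

lemma herm_abs_le {n : ℕ} (z ξ : En n) : ‖herm z ξ‖ ≤ ‖ξ‖ * ‖z‖ := by
  have h : herm z ξ = inner ℂ ξ z := by
    simp [herm, PiLp.inner_apply, RCLike.inner_apply, mul_comm]
  rw [h]
  exact norm_inner_le_norm ξ z

lemma herm_cont {n : ℕ} (ξ : En n) : Continuous fun z : En n => herm z ξ := by
  unfold herm
  exact continuous_finset_sum _ fun j _ =>
    ((EuclideanSpace.proj j : En n →L[ℂ] ℂ).continuous).mul continuous_const

lemma herm_smul {n : ℕ} (r : ℝ) (ξ z : En n) : herm z ((r:ℂ) • ξ) = (r:ℂ) * herm z ξ := by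
  unfold herm
  rw [Finset.mul_sum]
  refine Finset.sum_congr rfl fun j _ => ?_
  simp [PiLp.smul_apply, smul_eq_mul, map_mul, Complex.conj_ofReal]
  ring

lemma Qbox_measurable {n : ℕ} (δ : ℝ) (ξ : En n) : MeasurableSet (Qbox δ ξ) := by
  have : Qbox δ ξ = Metric.ball (0 : En n) 1 ∩
      {z | ‖1 - herm z ξ‖ < δ} := rfl
  rw [this]
  exact measurableSet_ball.inter
    ((isOpen_lt (continuous_norm.comp (continuous_const.sub (herm_cont ξ)))
      continuous_const).measurableSet)

/-- Lemma 2.2, (iii) implies (i). -/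
theorem stmt_4 (n : ℕ) (p ε s : ℝ) (hp : 1 < p) (hε : 0 < ε) (hs : 0 < s)
    (μ : Measure (En n)) (M : ℝ)
    (hμ : ∀ w ∈ Metric.ball (0 : En n) 1,
      ENNReal.ofReal (Real.log (2 / (1 - ‖w‖ ^ 2)) ^ (p - 1 + ε)) *
        ∫⁻ z in Metric.ball (0 : En n) 1,
          ENNReal.ofReal ((1 - ‖w‖ ^ 2) ^ s / ‖1 - herm z w‖ ^ s) ∂μ
        ≤ ENNReal.ofReal M) :
    ∃ C : ℝ, 0 < C ∧ ∀ ξ ∈ Metric.sphere (0 : En n) 1, ∀ δ : ℝ, 0 < δ → δ < 1 →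
      μ (Qbox δ ξ) ≤ ENNReal.ofReal (C * Real.log (2 / δ) ^ (1 - p - ε)) := by
  set q : ℝ := p - 1 + ε with hqdef
  have hq : 0 < q := by unfold q; linarith
  set c : ℝ := (3:ℝ)⁻¹ ^ s with hcdef
  have hc : 0 < c := Real.rpow_pos_of_pos (by norm_num) s
  refine ⟨max M 1 / c, by positivity, ?_⟩
  intro ξ hξ δ hδ0 hδ1
  have hξn : ‖ξ‖ = 1 := by simpa using hξ
  set r : ℝ := 1 - δ / 2 with hrdef
  have hr0 : 0 < r := by unfold r; linarith
  have hr1 : r < 1 := by unfold r; linarith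
  set w : En n := (r : ℂ) • ξ with hwdef
  have hwn : ‖w‖ = r := by
    rw [hwdef, norm_smul, Complex.norm_real, Real.norm_eq_abs, hξn, abs_of_pos hr0, mul_one]
  have hw : w ∈ Metric.ball (0 : En n) 1 := by
    rw [mem_ball_zero_iff, hwn]; exact hr1
  have hA : 1 - ‖w‖ ^ 2 = δ - δ ^ 2 / 4 := by rw [hwn]; unfold r; ring
  have hA1 : δ / 2 ≤ 1 - ‖w‖ ^ 2 := by rw [hA]; nlinarith
  have hA2 : 1 - ‖w‖ ^ 2 ≤ δ := by rw [hA]; nlinarith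
  have hApos : 0 < 1 - ‖w‖ ^ 2 := lt_of_lt_of_le (by linarith) hA1
  -- log bounds
  have hlogδ : 0 < Real.log (2 / δ) := by
    apply Real.log_pos
    rw [lt_div_iff₀ hδ0]; linarith
  have hL : Real.log (2 / δ) ≤ Real.log (2 / (1 - ‖w‖ ^ 2)) := by
    apply Real.log_le_log (by positivity)
    exact div_le_div_of_nonneg_left (by norm_num) hApos hA2
  -- pointwise bound on Qbox
  have hpt : ∀ z ∈ Qbox δ ξ,
      c ≤ (1 - ‖w‖ ^ 2) ^ s / ‖1 - herm z w‖ ^ s := by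
    intro z hz
    obtain ⟨hzb, hzq⟩ := hz
    have hzn : ‖z‖ < 1 := by rwa [mem_ball_zero_iff] at hzb
    have habs : ‖herm z ξ‖ ≤ 1 := by
      calc ‖herm z ξ‖ ≤ ‖ξ‖ * ‖z‖ := herm_abs_le z ξ
        _ ≤ 1 := by rw [hξn, one_mul]; exact hzn.le
    have hhw : herm z w = (r:ℂ) * herm z ξ := herm_smul r ξ z
    have hup : ‖1 - herm z w‖ ≤ 3 * δ / 2 := by
      have : (1 : ℂ) - herm z w = (1 - herm z ξ) + ((δ/2 : ℝ) : ℂ) * herm z ξ := by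
        rw [hhw]; push_cast; unfold r; push_cast; ring
      rw [this]
      calc ‖(1 - herm z ξ) + ((δ/2 : ℝ) : ℂ) * herm z ξ‖
          ≤ ‖1 - herm z ξ‖ + ‖((δ/2 : ℝ) : ℂ) * herm z ξ‖ :=
            norm_add_le _ _
        _ ≤ δ + (δ/2) * 1 := by
            apply add_le_add hzq.le
            rw [norm_mul, Complex.norm_real, Real.norm_eq_abs, abs_of_pos (by linarith : (0:ℝ) < δ/2)]
            exact mul_le_mul_of_nonneg_left habs (by linarith)
        _ = 3 * δ / 2 := by ring
    have hlow : 0 < ‖1 - herm z w‖ := by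
      have h1 : ‖herm z w‖ < 1 := by
        rw [hhw, norm_mul, Complex.norm_real, Real.norm_eq_abs, abs_of_pos hr0]
        calc r * ‖herm z ξ‖ ≤ r * 1 :=
              mul_le_mul_of_nonneg_left habs hr0.le
          _ < 1 := by linarith
      have h2 := norm_sub_norm_le (1 : ℂ) (herm z w)
      simp only [norm_one] at h2
      linarith
    have hnum : (δ/2) ^ s ≤ (1 - ‖w‖ ^ 2) ^ s :=
      Real.rpow_le_rpow (by linarith) hA1 hs.le
    have hden : ‖1 - herm z w‖ ^ s ≤ (3 * δ / 2) ^ s :=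
      Real.rpow_le_rpow (norm_nonneg _) hup hs.le
    have hdenpos : 0 < ‖1 - herm z w‖ ^ s := Real.rpow_pos_of_pos hlow s
    have hceq : c = (δ/2) ^ s / (3 * δ / 2) ^ s := by
      rw [hcdef, ← Real.div_rpow (by linarith) (by linarith)]
      congr 1
      field_simp
    rw [hceq]
    exact div_le_div₀ (Real.rpow_nonneg hApos.le s) hnum hdenpos hden
  -- integral lower bound
  have hQsub : Qbox δ ξ ⊆ Metric.ball (0 : En n) 1 := fun z hz => hz.1
  have key : ENNReal.ofReal c * μ (Qbox δ ξ) ≤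
      ∫⁻ z in Metric.ball (0 : En n) 1,
        ENNReal.ofReal ((1 - ‖w‖ ^ 2) ^ s / ‖1 - herm z w‖ ^ s) ∂μ := by
    calc ENNReal.ofReal c * μ (Qbox δ ξ)
        = ∫⁻ _ in Qbox δ ξ, ENNReal.ofReal c ∂μ := by rw [setLIntegral_const]
      _ ≤ ∫⁻ z in Qbox δ ξ,
            ENNReal.ofReal ((1 - ‖w‖ ^ 2) ^ s / ‖1 - herm z w‖ ^ s) ∂μ :=
          setLIntegral_mono' (Qbox_measurable δ ξ)
            (fun z hz => ENNReal.ofReal_le_ofReal (hpt z hz))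
      _ ≤ _ := lintegral_mono_set hQsub
  have h1 := hμ w hw
  set L : ℝ := Real.log (2 / (1 - ‖w‖ ^ 2)) with hLdef
  have hLpos : 0 < L := lt_of_lt_of_le hlogδ hL
  have h2 : ENNReal.ofReal (L ^ q * c) * μ (Qbox δ ξ) ≤ ENNReal.ofReal M := by
    rw [ENNReal.ofReal_mul (Real.rpow_nonneg hLpos.le q), mul_assoc]
    exact le_trans (mul_le_mul_right key _) h1
  have ha0 : ENNReal.ofReal (L ^ q * c) ≠ 0 := by
    simp only [ne_eq, ENNReal.ofReal_eq_zero, not_le]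
    positivity
  have h3 : μ (Qbox δ ξ) ≤ ENNReal.ofReal M / ENNReal.ofReal (L ^ q * c) := by
    rw [ENNReal.le_div_iff_mul_le (Or.inl ha0) (Or.inl ENNReal.ofReal_ne_top), mul_comm]
    exact h2
  refine le_trans h3 ?_
  rw [← ENNReal.ofReal_div_of_pos (by positivity)]
  apply ENNReal.ofReal_le_ofReal
  have hexp : (1 : ℝ) - p - ε = -q := by unfold q; ring
  rw [hexp, Real.rpow_neg hlogδ.le]
  have hlq : 0 < Real.log (2 / δ) ^ q := Real.rpow_pos_of_pos hlogδ q
  have hLq : Real.log (2 / δ) ^ q ≤ L ^ q := Real.rpow_le_rpow hlogδ.le hL hq.le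
  calc M / (L ^ q * c) ≤ max M 1 / (Real.log (2 / δ) ^ q * c) :=
        div_le_div₀ (le_trans zero_le_one (le_max_right M 1)) (le_max_left M 1) (by positivity)
          (mul_le_mul_of_nonneg_right hLq hc.le)
    _ = max M 1 / c * (Real.log (2 / δ) ^ q)⁻¹ := by
        rw [div_mul_eq_mul_div, ← div_eq_mul_inv, div_div]
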